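/- Consider a system of linear equations Σ_{i=1}^{N} a_{ℓi}·u_i = 0 (ℓ = 1, …, L) with rational coefficients a_{ℓi}. If (u_1, …, u_N) is a nondegenerate solution in which every u_i is a root of unity, then there is a single root of unity ζ such that every u_i/ζ is a P_N-th root of unity, where P_N denotes the product of all primes up to N. -/

import Mathlib

open Polynomial Finset


/-- Galois conjugation, concretely: a vanishing rational combination of powers of a
primitive `m`-th root of unity stays vanishing when `ζ` is replaced by `ζ^t`, `t` coprime. -/
lemma conj_sum_eq_zero {m : ℕ} (hm : 0 < m) {ζ : ℂ} (hζ : IsPrimitiveRoot ζ m)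
    {t : ℕ} (ht : Nat.Coprime t m) {ι : Type*} (S : Finset ι) (c : ι → ℚ) (e : ι → ℕ)
    (h : ∑ i ∈ S, (c i : ℂ) * ζ ^ (e i) = 0) :
    ∑ i ∈ S, (c i : ℂ) * ζ ^ (t * e i) = 0 := by
  set P : ℚ[X] := ∑ i ∈ S, Polynomial.C (c i) * X ^ (e i) with hP
  have haev : ∀ z : ℂ, aeval z P = ∑ i ∈ S, (c i : ℂ) * z ^ (e i) := by
    intro z
    rw [hP, map_sum]
    refine Finset.sum_congr rfl fun i _ => ?_
    simp
  have hPz : aeval ζ P = 0 := by rw [haev]; exact h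
  have hdvd : minpoly ℚ ζ ∣ P := minpoly.dvd ℚ ζ hPz
  have hmin : Polynomial.cyclotomic m ℚ = minpoly ℚ ζ :=
    Polynomial.cyclotomic_eq_minpoly_rat hζ hm
  have hprim : IsPrimitiveRoot (ζ ^ t) m := hζ.pow_of_coprime t ht
  have hroot : aeval (ζ ^ t) (minpoly ℚ ζ) = 0 := by
    rw [← hmin]
    have h2 : aeval (ζ ^ t) (Polynomial.cyclotomic m ℚ)
        = Polynomial.eval (ζ ^ t) (Polynomial.cyclotomic m ℂ) := by
      rw [← Polynomial.map_cyclotomic m (algebraMap ℚ ℂ), Polynomial.aeval_def,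
        Polynomial.eval_map]
    rw [h2]
    exact hprim.isRoot_cyclotomic hm
  obtain ⟨R, hR⟩ := hdvd
  have : aeval (ζ ^ t) P = 0 := by rw [hR, map_mul, hroot, zero_mul]
  rw [haev] at this
  rw [← this]
  refine Finset.sum_congr rfl fun i _ => ?_
  rw [pow_mul]

lemma geom_sum_prim {p : ℕ} (hp : 0 < p) {x : ℂ} (hx : x ^ p = 1) :
    ∑ k ∈ Finset.range p, x ^ k = if x = 1 then (p : ℂ) else 0 := by
  split_ifs with h
  · simp [h]
  · rw [geom_sum_eq h, hx, sub_self, zero_div]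

lemma squarefree_dvd_primorial {m n : ℕ} (hm : Squarefree m)
    (h : ∀ p : ℕ, p.Prime → p ∣ m → p ≤ n) : m ∣ primorial n := by
  rw [← Nat.prod_primeFactors_of_squarefree hm]
  unfold primorial
  apply Finset.prod_dvd_prod_of_subset
  intro p hp
  rw [Nat.mem_primeFactors] at hp
  simp only [Finset.mem_filter, Finset.mem_range]
  exact ⟨Nat.lt_succ_of_le (h p hp.1 hp.2.1), hp.1⟩


lemma nat_mod_helper {p r e : ℕ} (hp : 0 < p) (hr : r < p) :
    p ∣ (p - r + e) ↔ e % p = r := by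
  constructor
  · intro h
    have h1 : (p - r + e) ≡ 0 [MOD p] := (Nat.modEq_zero_iff_dvd).mpr h
    have h2 : (p - r + e + r) ≡ (0 + r) [MOD p] := h1.add_right r
    have hdr : p - r + e + r = e + p := by omega
    rw [hdr, zero_add] at h2
    have h3 : (e + p) % p = r % p := h2
    rw [Nat.add_mod_right] at h3
    rw [h3, Nat.mod_eq_of_lt hr]
  · intro h
    rcases Nat.eq_zero_or_pos r with rfl | hrpos
    · have : p - 0 + e = p + e := by omega
      rw [this]
      exact Nat.dvd_add dvd_rfl (Nat.dvd_of_mod_eq_zero h)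
    · rw [Nat.dvd_iff_mod_eq_zero, Nat.add_mod, Nat.mod_eq_of_lt (by omega : p - r < p), h]
      have h2 : p - r + r = p := by omega
      rw [h2, Nat.mod_self]

lemma primorial_dvd_primorial' {m n : ℕ} (h : m ≤ n) : primorial m ∣ primorial n := by
  unfold primorial
  apply Finset.prod_dvd_prod_of_subset
  intro p hp
  simp only [Finset.mem_filter, Finset.mem_range] at hp ⊢
  exact ⟨by omega, hp.2⟩

lemma coprime_of_modEq {a b n : ℕ} (hab : a ≡ b [MOD n]) (hbn : Nat.Coprime b n) :
    Nat.Coprime a n := by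
  unfold Nat.Coprime at *
  rw [Nat.gcd_comm, Nat.gcd_rec, hab, ← Nat.gcd_rec, Nat.gcd_comm]
  exact hbn

lemma mann_norm {ι : Type} (S : Finset ι) (c : ι → ℚ) (w : ι → ℂ)
    (hw : ∀ i ∈ S, ∃ k : ℕ, 0 < k ∧ w i ^ k = 1)
    (hsum : ∑ i ∈ S, (c i : ℂ) * w i = 0)
    (hmin : ∀ T ⊆ S, T.Nonempty → ∑ i ∈ T, (c i : ℂ) * w i = 0 → T = S)
    {j : ι} (hj : j ∈ S) (hwj : w j = 1) :
    ∀ i ∈ S, w i ^ primorial S.card = 1 := by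
  classical
  -- a common exponent exists
  have hex : ∃ m : ℕ, 0 < m ∧ ∀ i ∈ S, w i ^ m = 1 := by
    set K : ι → ℕ := fun i => if h : i ∈ S then (hw i h).choose else 1 with hK
    have hKpos : ∀ i, 0 < K i := by
      intro i
      rw [hK]
      simp only []
      split
      · exact (hw i ‹_›).choose_spec.1
      · exact one_pos
    refine ⟨∏ i ∈ S, K i, Finset.prod_pos (fun i _ => hKpos i), fun i hi => ?_⟩
    obtain ⟨d, hd⟩ := Finset.dvd_prod_of_mem K hi
    rw [hd, pow_mul]
    have : w i ^ K i = 1 := by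
      rw [hK]; simp only [dif_pos hi]; exact (hw i hi).choose_spec.2
    rw [this, one_pow]
  obtain ⟨m, ⟨hmpos, hall⟩, hminimal⟩ :
      ∃ m, (0 < m ∧ ∀ i ∈ S, w i ^ m = 1) ∧
        ∀ m' < m, ¬(0 < m' ∧ ∀ i ∈ S, w i ^ m' = 1) :=
    ⟨Nat.find hex, Nat.find_spec hex, fun m' h => Nat.find_min hex h⟩
  suffices hdvd : m ∣ primorial S.card by
    intro i hi
    obtain ⟨d, hd⟩ := hdvd
    rw [hd, pow_mul, hall i hi, one_pow]
  -- the key claim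
  have key : ∀ p : ℕ, p.Prime → p ∣ m → (p * p ∣ m ∨ S.card < p) → False := by
    intro p hp hpm hbad
    set q := m / p with hq
    have hqm : m = p * q := (Nat.mul_div_cancel' hpm).symm
    have hqpos : 0 < q := Nat.div_pos (Nat.le_of_dvd hmpos hpm) hp.pos
    have hqlt : q < m := by
      rw [hqm]; exact lt_mul_of_one_lt_left hqpos hp.one_lt
    haveI : NeZero m := ⟨hmpos.ne'⟩
    set ζ : ℂ := Complex.exp (2 * Real.pi * Complex.I / m) with hζdef
    have hζ : IsPrimitiveRoot ζ m := Complex.isPrimitiveRoot_exp m hmpos.ne'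
    have hexe : ∀ i ∈ S, ∃ n : ℕ, n < m ∧ ζ ^ n = w i := fun i hi =>
      hζ.eq_pow_of_pow_eq_one (hall i hi)
    set e : ι → ℕ := fun i => if h : i ∈ S then (hexe i h).choose else 0 with he
    have helt : ∀ i ∈ S, e i < m := by
      intro i hi; rw [he]; simp only []; rw [dif_pos hi]; exact (hexe i hi).choose_spec.1
    have hei : ∀ i ∈ S, ζ ^ e i = w i := by
      intro i hi; rw [he]; simp only []; rw [dif_pos hi]; exact (hexe i hi).choose_spec.2
    have hej : e j = 0 := by
      have h1 : ζ ^ e j = 1 := by rw [hei j hj, hwj]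
      have h2 : m ∣ e j := (hζ.pow_eq_one_iff_dvd _).mp h1
      exact Nat.eq_zero_of_dvd_of_lt h2 (helt j hj)
    have hsume : ∑ i ∈ S, (c i : ℂ) * ζ ^ e i = 0 := by
      rw [← hsum]; exact Finset.sum_congr rfl fun i hi => by rw [hei i hi]
    have hζper : ∀ x y : ℕ, x ≡ y [MOD m] → ζ ^ x = ζ ^ y := by
      have key2 : ∀ x y : ℕ, x ≤ y → x ≡ y [MOD m] → ζ ^ x = ζ ^ y := by
        intro x y hxy h
        obtain ⟨d, hd⟩ : m ∣ y - x := (Nat.modEq_iff_dvd' hxy).mp h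
        have hy : y = x + m * d := by omega
        rw [hy, pow_add, pow_mul, hζ.pow_eq_one, one_pow, mul_one]
      intro x y h
      rcases le_total x y with hle | hle
      · exact key2 x y hle h
      · exact (key2 y x hle h.symm).symm
    have hp0 : (p : ℂ) ≠ 0 := Nat.cast_ne_zero.mpr hp.pos.ne'
    -- the subclaim : each mod-p class of exponents gives a vanishing subsum
    have hsub : ∀ r : ℕ, r < p →
        ∑ i ∈ S.filter (fun i => e i % p = r), (c i : ℂ) * ζ ^ e i = 0 := by
      by_cases hpp : p * p ∣ m
      · -- case p² ∣ m
        intro r hr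
        have hppq : p ∣ q := by
          have h2 : p * p ∣ p * q := by rw [← hqm]; exact hpp
          exact (mul_dvd_mul_iff_left hp.pos.ne').mp h2
        have hζpiff : ∀ s : ℕ, (ζ ^ q) ^ s = 1 ↔ p ∣ s := by
          intro s
          rw [← pow_mul, hζ.pow_eq_one_iff_dvd, hqm, mul_comm p q]
          exact mul_dvd_mul_iff_left hqpos.ne'
        have hcop : ∀ k : ℕ, Nat.Coprime (1 + k * q) m := by
          intro k
          rw [hqm]
          apply Nat.Coprime.mul_right
          · have hnd : ¬ p ∣ (1 + k * q) := by
              intro hdvd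
              have h2 : p ∣ k * q := Dvd.dvd.mul_left hppq k
              have h3 : p ∣ 1 := by
                have h4 := Nat.dvd_sub hdvd h2
                rwa [Nat.add_sub_cancel] at h4
              have := Nat.le_of_dvd one_pos h3
              have := hp.one_lt
              omega
            exact Nat.coprime_comm.mp ((Nat.Prime.coprime_iff_not_dvd hp).mpr hnd)
          · have hmod : (1 + k * q) ≡ 1 [MOD q] := Nat.add_mul_mod_self_right 1 k q
            exact coprime_of_modEq hmod (Nat.coprime_one_left q)
        have hconj : ∀ k : ℕ, ∑ i ∈ S, (c i : ℂ) * ζ ^ ((1 + k * q) * e i) = 0 :=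
          fun k => conj_sum_eq_zero hmpos hζ (hcop k) S c e hsume
        have h0 : ∑ k ∈ Finset.range p,
            (ζ ^ q) ^ (k * (p - r)) * ∑ i ∈ S, (c i : ℂ) * ζ ^ ((1 + k * q) * e i) = 0 := by
          apply Finset.sum_eq_zero; intro k _; rw [hconj k, mul_zero]
        have h1 : ∑ i ∈ S, (c i : ℂ) * ζ ^ e i
            * ∑ k ∈ Finset.range p, ((ζ ^ q) ^ (p - r + e i)) ^ k = 0 := by
          rw [← h0]
          calc ∑ i ∈ S, (c i : ℂ) * ζ ^ e i * ∑ k ∈ Finset.range p, ((ζ ^ q) ^ (p - r + e i)) ^ k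
              = ∑ i ∈ S, ∑ k ∈ Finset.range p,
                (c i : ℂ) * ζ ^ e i * ((ζ ^ q) ^ (p - r + e i)) ^ k := by
                exact Finset.sum_congr rfl fun i _ => Finset.mul_sum _ _ _
            _ = ∑ k ∈ Finset.range p, ∑ i ∈ S,
                (c i : ℂ) * ζ ^ e i * ((ζ ^ q) ^ (p - r + e i)) ^ k := Finset.sum_comm
            _ = ∑ k ∈ Finset.range p,
                (ζ ^ q) ^ (k * (p - r)) * ∑ i ∈ S, (c i : ℂ) * ζ ^ ((1 + k * q) * e i) := by
                refine Finset.sum_congr rfl fun k _ => ?_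
                rw [Finset.mul_sum]
                refine Finset.sum_congr rfl fun i _ => ?_
                ring
        have h2 : ∑ i ∈ S, (c i : ℂ) * ζ ^ e i * (if e i % p = r then (p : ℂ) else 0) = 0 := by
          have heq : ∑ i ∈ S, (c i : ℂ) * ζ ^ e i * (if e i % p = r then (p : ℂ) else 0)
              = ∑ i ∈ S, (c i : ℂ) * ζ ^ e i
                * ∑ k ∈ Finset.range p, ((ζ ^ q) ^ (p - r + e i)) ^ k := by
            refine Finset.sum_congr rfl fun i hi => ?_
            congr 1
            have hx : ((ζ ^ q) ^ (p - r + e i)) ^ p = 1 := by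
              rw [← pow_mul, mul_comm, pow_mul, (hζpiff p).mpr dvd_rfl, one_pow]
            rw [geom_sum_prim hp.pos hx]
            simp only [hζpiff, nat_mod_helper hp.pos hr]
          rw [heq]
          exact h1
        have h3 : (∑ i ∈ S.filter (fun i => e i % p = r), (c i : ℂ) * ζ ^ e i) * p = 0 := by
          have heq : (∑ i ∈ S.filter (fun i => e i % p = r), (c i : ℂ) * ζ ^ e i) * p
              = ∑ i ∈ S, (c i : ℂ) * ζ ^ e i * (if e i % p = r then (p : ℂ) else 0) := by
            rw [Finset.sum_mul, Finset.sum_filter]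
            refine Finset.sum_congr rfl fun i hi => ?_
            by_cases hc : e i % p = r <;> simp [hc]
          rw [heq]
          exact h2
        exact (mul_eq_zero.mp h3).resolve_right hp0
      · -- case p² ∤ m, so S.card < p
        intro r hr
        have hcard : S.card < p := hbad.resolve_left hpp
        have hpq : ¬ p ∣ q := by
          intro h
          exact hpp (by rw [hqm]; exact mul_dvd_mul_left p h)
        have hcop : Nat.Coprime p q := (Nat.Prime.coprime_iff_not_dvd hp).mpr hpq
        obtain ⟨A, hA1, hA2⟩ := Nat.chineseRemainder hcop 1 0
        obtain ⟨B, hB1, hB2⟩ := Nat.chineseRemainder hcop 0 1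
        have hζcong : ∀ x y : ℕ, x ≡ y [MOD p] → x ≡ y [MOD q] → ζ ^ x = ζ ^ y := by
          intro x y h1 h2
          apply hζper
          rw [hqm]
          exact (Nat.modEq_and_modEq_iff_modEq_mul hcop).mp ⟨h1, h2⟩
        have hqA : q ∣ A := (Nat.modEq_zero_iff_dvd).mp hA2
        have hωp : (ζ ^ A) ^ p = 1 := by
          rw [← pow_mul, hζ.pow_eq_one_iff_dvd, hqm]
          obtain ⟨d, hd⟩ := hqA
          exact ⟨d, by rw [hd]; ring⟩
        have hωne : (ζ ^ A) ≠ 1 := by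
          intro h1
          have h2 : m ∣ A := (hζ.pow_eq_one_iff_dvd A).mp h1
          have h3 : p ∣ A := dvd_trans (Dvd.intro q hqm.symm) h2
          have h4 : A % p = 1 % p := hA1
          have h5 : A % p = 0 := by
            obtain ⟨d, rfl⟩ := h3
            exact Nat.mul_mod_right p d
          have h6 : 1 % p = 1 := Nat.one_mod_eq_one.mpr (by have := hp.one_lt; omega)
          omega
        haveI := Fact.mk hp
        have hordω : orderOf (ζ ^ A) = p := orderOf_eq_prime hωp hωne
        have hωiff : ∀ s : ℕ, (ζ ^ A) ^ s = 1 ↔ p ∣ s := by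
          intro s; rw [← hordω, orderOf_dvd_iff_pow_eq_one]
        have ht1 : ∀ k : ℕ, (Nat.chineseRemainder hcop k 1 : ℕ) ≡ k [MOD p] :=
          fun k => (Nat.chineseRemainder hcop k 1).2.1
        have ht2 : ∀ k : ℕ, (Nat.chineseRemainder hcop k 1 : ℕ) ≡ 1 [MOD q] :=
          fun k => (Nat.chineseRemainder hcop k 1).2.2
        have htcop : ∀ k, 1 ≤ k → k < p → Nat.Coprime (Nat.chineseRemainder hcop k 1 : ℕ) m := by
          intro k hk1 hkp
          rw [hqm]
          apply Nat.Coprime.mul_right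
          · apply coprime_of_modEq (ht1 k)
            exact Nat.coprime_comm.mp ((Nat.Prime.coprime_iff_not_dvd hp).mpr (by
              intro hdvd; have := Nat.le_of_dvd (by omega) hdvd; omega))
          · exact coprime_of_modEq (ht2 k) (Nat.coprime_one_left q)
        have hconj : ∀ k ∈ Finset.Ico 1 p,
            ∑ i ∈ S, (c i : ℂ) * ζ ^ ((Nat.chineseRemainder hcop k 1 : ℕ) * e i) = 0 := by
          intro k hk
          rw [Finset.mem_Ico] at hk
          exact conj_sum_eq_zero hmpos hζ (htcop k hk.1 hk.2) S c e hsume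
        have hconv : ∀ k i, ζ ^ ((Nat.chineseRemainder hcop k 1 : ℕ) * e i)
            = (ζ ^ A) ^ (k * e i) * ζ ^ (B * e i) := by
          intro k i
          rw [← pow_mul, ← pow_add]
          apply hζcong
          · exact ((ht1 k).mul_right (e i)).trans
              (by simpa using ((hA1.mul_right (k * e i)).add (hB1.mul_right (e i))).symm)
          · exact ((ht2 k).mul_right (e i)).trans
              (by simpa using ((hA2.mul_right (k * e i)).add (hB2.mul_right (e i))).symm)
        have hterm1 : ∀ i, ζ ^ (e i) = (ζ ^ A) ^ (e i) * ζ ^ (B * e i) := by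
          intro i
          rw [← pow_mul, ← pow_add]
          apply hζcong
          · simpa using ((hA1.mul_right (e i)).add (hB1.mul_right (e i))).symm
          · simpa using ((hA2.mul_right (e i)).add (hB2.mul_right (e i))).symm
        have hstar : ∀ r' : ℕ, r' < p →
            (∑ i ∈ S.filter (fun i => e i % p = r'), (c i : ℂ) * ζ ^ (B * e i)) * p
              = ∑ i ∈ S, (c i : ℂ) * ζ ^ (B * e i) := by
          intro r' hr'
          have h0 : ∑ k ∈ Finset.Ico 1 p, (ζ ^ A) ^ (k * (p - r'))
              * ∑ i ∈ S, (c i : ℂ) * ζ ^ ((Nat.chineseRemainder hcop k 1 : ℕ) * e i) = 0 := by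
            apply Finset.sum_eq_zero; intro k hk; rw [hconj k hk, mul_zero]
          have h1 : ∑ i ∈ S, (c i : ℂ) * ζ ^ (B * e i)
              * ∑ k ∈ Finset.Ico 1 p, ((ζ ^ A) ^ (p - r' + e i)) ^ k = 0 := by
            rw [← h0]
            calc ∑ i ∈ S, (c i : ℂ) * ζ ^ (B * e i)
                  * ∑ k ∈ Finset.Ico 1 p, ((ζ ^ A) ^ (p - r' + e i)) ^ k
                = ∑ i ∈ S, ∑ k ∈ Finset.Ico 1 p,
                  (c i : ℂ) * ζ ^ (B * e i) * ((ζ ^ A) ^ (p - r' + e i)) ^ k := by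
                  exact Finset.sum_congr rfl fun i _ => Finset.mul_sum _ _ _
              _ = ∑ k ∈ Finset.Ico 1 p, ∑ i ∈ S,
                  (c i : ℂ) * ζ ^ (B * e i) * ((ζ ^ A) ^ (p - r' + e i)) ^ k := Finset.sum_comm
              _ = ∑ k ∈ Finset.Ico 1 p, (ζ ^ A) ^ (k * (p - r'))
                  * ∑ i ∈ S, (c i : ℂ) * ζ ^ ((Nat.chineseRemainder hcop k 1 : ℕ) * e i) := by
                  refine Finset.sum_congr rfl fun k _ => ?_
                  rw [Finset.mul_sum]
                  refine Finset.sum_congr rfl fun i _ => ?_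
                  rw [hconv k i]
                  ring
          have h2 : ∑ i ∈ S, (c i : ℂ) * ζ ^ (B * e i)
              * ((if e i % p = r' then (p : ℂ) else 0) - 1) = 0 := by
            have heq2 : ∑ i ∈ S, (c i : ℂ) * ζ ^ (B * e i)
                * ((if e i % p = r' then (p : ℂ) else 0) - 1)
                = ∑ i ∈ S, (c i : ℂ) * ζ ^ (B * e i)
                  * ∑ k ∈ Finset.Ico 1 p, ((ζ ^ A) ^ (p - r' + e i)) ^ k := by
              refine Finset.sum_congr rfl fun i _ => ?_
              congr 1
              have hx : ((ζ ^ A) ^ (p - r' + e i)) ^ p = 1 := by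
                rw [← pow_mul, mul_comm, pow_mul, hωp, one_pow]
              have hrange : ∑ k ∈ Finset.range p, ((ζ ^ A) ^ (p - r' + e i)) ^ k
                  = if e i % p = r' then (p : ℂ) else 0 := by
                rw [geom_sum_prim hp.pos hx]
                simp only [hωiff, nat_mod_helper hp.pos hr']
              have hsplit : ∑ k ∈ Finset.range p, ((ζ ^ A) ^ (p - r' + e i)) ^ k
                  = ((ζ ^ A) ^ (p - r' + e i)) ^ 0
                    + ∑ k ∈ Finset.Ico 1 p, ((ζ ^ A) ^ (p - r' + e i)) ^ k := by
                rw [Finset.range_eq_Ico]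
                exact Finset.sum_eq_sum_Ico_succ_bot hp.pos _
              rw [pow_zero] at hsplit
              rw [← hrange, hsplit]
              ring
            rw [heq2]
            exact h1
          have h3 : (∑ i ∈ S.filter (fun i => e i % p = r'), (c i : ℂ) * ζ ^ (B * e i)) * p
              - ∑ i ∈ S, (c i : ℂ) * ζ ^ (B * e i) = 0 := by
            have heq3 : (∑ i ∈ S.filter (fun i => e i % p = r'), (c i : ℂ) * ζ ^ (B * e i)) * p
                - ∑ i ∈ S, (c i : ℂ) * ζ ^ (B * e i)
                = ∑ i ∈ S, (c i : ℂ) * ζ ^ (B * e i)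
                  * ((if e i % p = r' then (p : ℂ) else 0) - 1) := by
              rw [Finset.sum_mul, Finset.sum_filter, ← Finset.sum_sub_distrib]
              refine Finset.sum_congr rfl fun i hi => ?_
              by_cases hc : e i % p = r' <;> simp [hc] <;> ring
            rw [heq3]
            exact h2
          exact sub_eq_zero.mp h3
        have hV : ∃ r0, r0 < p ∧ ∀ i ∈ S, e i % p ≠ r0 := by
          have hVcard : (S.image (fun i => e i % p)).card < p :=
            lt_of_le_of_lt Finset.card_image_le hcard
          have hss : ∃ r0 ∈ Finset.range p, r0 ∉ S.image (fun i => e i % p) := by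
            by_contra hcon
            push_neg at hcon
            have hsub2 : Finset.range p ⊆ S.image (fun i => e i % p) := fun x hx => hcon x hx
            have hcc := Finset.card_le_card hsub2
            rw [Finset.card_range] at hcc
            omega
          obtain ⟨r0, hr0, hr0V⟩ := hss
          exact ⟨r0, Finset.mem_range.mp hr0,
            fun i hi hc => hr0V (Finset.mem_image.mpr ⟨i, hi, hc⟩)⟩
        obtain ⟨r0, hr0p, hr0⟩ := hV
        have hσ : ∑ i ∈ S, (c i : ℂ) * ζ ^ (B * e i) = 0 := by
          have hst := hstar r0 hr0p
          rw [Finset.filter_false_of_mem (fun i hi => hr0 i hi)] at hst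
          simpa using hst.symm
        have hfil : ∑ i ∈ S.filter (fun i => e i % p = r), (c i : ℂ) * ζ ^ (B * e i) = 0 := by
          have hst := hstar r hr
          rw [hσ] at hst
          exact (mul_eq_zero.mp hst).resolve_right hp0
        calc ∑ i ∈ S.filter (fun i => e i % p = r), (c i : ℂ) * ζ ^ e i
            = ∑ i ∈ S.filter (fun i => e i % p = r),
              (ζ ^ A) ^ r * ((c i : ℂ) * ζ ^ (B * e i)) := by
              refine Finset.sum_congr rfl fun i hi => ?_
              have hmem := Finset.mem_filter.mp hi
              have hωe : (ζ ^ A) ^ e i = (ζ ^ A) ^ r := by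
                conv_lhs => rw [← Nat.div_add_mod (e i) p]
                rw [pow_add, pow_mul, hωp, one_pow, one_mul, hmem.2]
              rw [hterm1 i, ← hωe]
              ring
          _ = (ζ ^ A) ^ r * ∑ i ∈ S.filter (fun i => e i % p = r), (c i : ℂ) * ζ ^ (B * e i) := by
              rw [Finset.mul_sum]
          _ = 0 := by rw [hfil, mul_zero]
    -- endgame
    have hC0 : S.filter (fun i => e i % p = 0) = S := by
      apply hmin _ (Finset.filter_subset _ _)
      · exact ⟨j, Finset.mem_filter.mpr ⟨hj, by rw [hej]; exact Nat.zero_mod p⟩⟩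
      · rw [← hsub 0 hp.pos]
        exact Finset.sum_congr rfl fun i hi =>
          by rw [hei i (Finset.mem_filter.mp hi).1]
    have hallp : ∀ i ∈ S, p ∣ e i := by
      intro i hi
      have hmem : i ∈ S.filter (fun i => e i % p = 0) := hC0.symm ▸ hi
      exact Nat.dvd_of_mod_eq_zero (Finset.mem_filter.mp hmem).2
    have hq1 : ∀ i ∈ S, w i ^ q = 1 := by
      intro i hi
      obtain ⟨d, hd⟩ := hallp i hi
      rw [← hei i hi, ← pow_mul, hd]
      have hexp : p * d * q = m * d := by rw [hqm]; ring
      rw [hexp, pow_mul, hζ.pow_eq_one, one_pow]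
    exact hminimal q hqlt ⟨hqpos, hq1⟩
  apply squarefree_dvd_primorial
  · rw [Nat.squarefree_iff_prime_squarefree]
    intro p hp hsq
    exact key p hp (dvd_trans (dvd_mul_left p p) hsq) (Or.inl hsq)
  · intro p hp hpm
    by_contra hlt
    exact key p hp hpm (Or.inr (by omega))

lemma root_ne_zero {z : ℂ} (h : ∃ k : ℕ, 0 < k ∧ z ^ k = 1) : z ≠ 0 := by
  obtain ⟨k, hk, h1⟩ := h
  intro h0
  rw [h0, zero_pow hk.ne'] at h1
  exact zero_ne_one h1

lemma mann {ι : Type} (S : Finset ι) (c : ι → ℚ) (u : ι → ℂ)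
    (hu : ∀ i ∈ S, ∃ k : ℕ, 0 < k ∧ u i ^ k = 1)
    (hsum : ∑ i ∈ S, (c i : ℂ) * u i = 0)
    (hmin : ∀ T ⊆ S, T.Nonempty → ∑ i ∈ T, (c i : ℂ) * u i = 0 → T = S) :
    ∀ i ∈ S, ∀ j ∈ S, (u i / u j) ^ primorial S.card = 1 := by
  intro i hi j hj
  have hune : ∀ i' ∈ S, u i' ≠ 0 := fun i' hi' => root_ne_zero (hu i' hi')
  have hjne : u j ≠ 0 := hune j hj
  have hw : ∀ i' ∈ S, ∃ k : ℕ, 0 < k ∧ (u i' / u j) ^ k = 1 := by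
    intro i' hi'
    obtain ⟨k, hk, h1⟩ := hu i' hi'
    obtain ⟨k', hk', h1'⟩ := hu j hj
    refine ⟨k * k', Nat.mul_pos hk hk', ?_⟩
    rw [div_pow, pow_mul (u i') k k', pow_mul' (u j) k k', h1, h1', one_pow, one_pow,
      one_div_one]
  have hsum' : ∑ i' ∈ S, (c i' : ℂ) * (u i' / u j) = 0 := by
    have heq : ∑ i' ∈ S, (c i' : ℂ) * (u i' / u j)
        = (∑ i' ∈ S, (c i' : ℂ) * u i') / u j := by
      rw [Finset.sum_div]
      exact Finset.sum_congr rfl fun i' _ => (mul_div_assoc _ _ _).symm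
    rw [heq, hsum, zero_div]
  have hmin' : ∀ T ⊆ S, T.Nonempty → ∑ i' ∈ T, (c i' : ℂ) * (u i' / u j) = 0 → T = S := by
    intro T hT hTne hTsum
    apply hmin T hT hTne
    have heq : ∑ i' ∈ T, (c i' : ℂ) * u i'
        = (∑ i' ∈ T, (c i' : ℂ) * (u i' / u j)) * u j := by
      rw [Finset.sum_mul]
      refine Finset.sum_congr rfl fun i' _ => ?_
      rw [mul_assoc, div_mul_cancel₀ _ hjne]
    rw [heq, hTsum, zero_mul]
  exact mann_norm S c (fun i' => u i' / u j) hw hsum' hmin' hj (div_self hjne) i hi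

lemma split_classes {ι : Type} [DecidableEq ι] (N : ℕ) (u : ι → ℂ)
    (hu : ∀ i, ∃ k : ℕ, 0 < k ∧ u i ^ k = 1) (c : ι → ℚ) (S : Finset ι) :
    S.card ≤ N → (∑ i ∈ S, (c i : ℂ) * u i = 0) → ∀ j : ι,
      ∑ i ∈ S.filter (fun i => (u i / u j) ^ primorial N = 1), (c i : ℂ) * u i = 0 := by
  classical
  induction S using Finset.strongInduction with
  | _ S ih =>
    intro hcard hsum j
    by_cases hzero : ∃ i ∈ S, c i = 0
    · obtain ⟨i0, hi0, hc0⟩ := hzero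
      have hsum' : ∑ i ∈ S.erase i0, (c i : ℂ) * u i = 0 := by
        rw [Finset.sum_erase S (f := fun i => (c i : ℂ) * u i) (by simp [hc0])]
        exact hsum
      have hcard' : (S.erase i0).card ≤ N :=
        le_trans (Finset.card_le_card (Finset.erase_subset _ _)) hcard
      have hres := ih (S.erase i0) (Finset.erase_ssubset hi0) hcard' hsum' j
      rw [Finset.filter_erase] at hres
      rwa [Finset.sum_erase _ (by simp [hc0])] at hres
    · push_neg at hzero
      rcases Finset.eq_empty_or_nonempty S with rfl | hS
      · simp
      by_cases hsplit : ∃ T ⊆ S, T.Nonempty ∧ (∑ i ∈ T, (c i : ℂ) * u i = 0) ∧ T ≠ S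
      · obtain ⟨T, hTS, hTne, hTsum, hTneq⟩ := hsplit
        have hT' : T ⊂ S := ssubset_of_subset_of_ne hTS hTneq
        have hSdiff : ∑ i ∈ S \ T, (c i : ℂ) * u i = 0 := by
          rw [Finset.sum_sdiff_eq_sub hTS, hsum, hTsum, sub_zero]
        have h1 := ih T hT' (le_trans (Finset.card_le_card hTS) hcard) hTsum j
        have h2 := ih (S \ T) (Finset.sdiff_ssubset hTS hTne)
          (le_trans (Finset.card_le_card Finset.sdiff_subset) hcard) hSdiff j
        have hunion : S.filter (fun i => (u i / u j) ^ primorial N = 1)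
            = T.filter (fun i => (u i / u j) ^ primorial N = 1)
              ∪ (S \ T).filter (fun i => (u i / u j) ^ primorial N = 1) := by
          rw [← Finset.filter_union, Finset.union_sdiff_of_subset hTS]
        rw [hunion, Finset.sum_union (Finset.disjoint_filter_filter Finset.disjoint_sdiff),
          h1, h2, add_zero]
      · push_neg at hsplit
        have hmann := mann S c u (fun i _ => hu i) hsum hsplit
        by_cases hcls : ∃ i0 ∈ S, (u i0 / u j) ^ primorial N = 1
        · obtain ⟨i0, hi0, hrel⟩ := hcls
          have hfull : S.filter (fun i => (u i / u j) ^ primorial N = 1) = S := by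
            apply Finset.filter_true_of_mem
            intro i hi
            have hq := hmann i hi i0 hi0
            obtain ⟨d, hd⟩ := primorial_dvd_primorial' hcard
            have h1 : (u i / u i0) ^ primorial N = 1 := by
              rw [hd, pow_mul, hq, one_pow]
            have hne0 : u i0 ≠ 0 := root_ne_zero (hu i0)
            have hcomp : u i / u j = (u i / u i0) * (u i0 / u j) := by
              field_simp
            rw [hcomp, mul_pow, h1, hrel, one_mul]
          rw [hfull]
          exact hsum
        · push_neg at hcls
          rw [Finset.filter_false_of_mem (fun i hi => hcls i hi)]
          exact Finset.sum_empty

/-- If `(u 0, …, u (N-1))` is a nondegenerate solution, consisting of roots of unity, of the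
linear system `Σ_i a ℓ i * u i = 0` (`ℓ < L`), then up to a common factor of proportionality
(a root of unity `ζ`) the `u i` are all `P_N`-th roots of unity, where `P_N` is the product
of all primes up to `N` (the primorial of `N`). -/
theorem nondegenerate_root_of_unity_solution (L N : ℕ) (a : Fin L → Fin N → ℚ) (u : Fin N → ℂ)
    (hu : ∀ i, ∃ k : ℕ, 0 < k ∧ u i ^ k = 1)
    (hsol : ∀ ℓ, ∑ i, (a ℓ i : ℂ) * u i = 0)
    (hnondeg : ¬ ∃ I : Finset (Fin N), I.Nonempty ∧ I ≠ Finset.univ ∧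
      ∀ ℓ, ∑ i ∈ I, (a ℓ i : ℂ) * u i = 0) :
    ∃ ζ : ℂ, (∃ k : ℕ, 0 < k ∧ ζ ^ k = 1) ∧ ∀ i, (u i / ζ) ^ primorial N = 1 := by
  classical
  rcases Nat.eq_zero_or_pos N with rfl | hN
  · exact ⟨1, ⟨1, one_pos, one_pow 1⟩, fun i => i.elim0⟩
  · set i0 : Fin N := ⟨0, hN⟩
    refine ⟨u i0, hu i0, ?_⟩
    by_contra hcon
    push_neg at hcon
    obtain ⟨i1, hi1⟩ := hcon
    apply hnondeg
    refine ⟨Finset.univ.filter (fun i => (u i / u i0) ^ primorial N = 1), ?_, ?_, ?_⟩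
    · exact ⟨i0, Finset.mem_filter.mpr ⟨Finset.mem_univ _, by
        rw [div_self (root_ne_zero (hu i0)), one_pow]⟩⟩
    · intro hEq
      have hmem : i1 ∈ Finset.univ.filter
          (fun i => (u i / u i0) ^ primorial N = 1) := by
        rw [hEq]
        exact Finset.mem_univ i1
      exact hi1 (Finset.mem_filter.mp hmem).2
    · intro ℓ
      exact split_classes N u hu (a ℓ) Finset.univ (by simp) (hsol ℓ) i0
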